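/- Let a, b be nonnegative integers with g = a + b, and suppose g + 2 < 3·|a - b|. Let ζ be a primitive complex cube root of unity and τ = a·ζ + b·ζ⁻¹. Then |1 - conj(τ)| > (g+2)/√3. -/

import Mathlib

theorem abs_one_sub_conj_tau_gt (a b g : ℕ) (hg : g = a + b)
    (hlt : (g : ℤ) + 2 < 3 * |(a : ℤ) - (b : ℤ)|) (ζ : ℂ)
    (hζ : ζ ^ 2 + ζ + 1 = 0) (τ : ℂ) (hτ : τ = (a : ℂ) * ζ + (b : ℂ) * ζ⁻¹) :
    ‖1 - (starRingEnd ℂ) τ‖ > ((g : ℝ) + 2) / Real.sqrt 3 := by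
  have hζ0 : ζ ≠ 0 := by
    intro h; rw [h] at hζ; norm_num at hζ
  have h3 : ζ ^ 3 = 1 := by linear_combination (ζ - 1) * hζ
  have hinv : ζ⁻¹ = ζ ^ 2 := by
    field_simp
    linear_combination -h3
  -- conj ζ = ζ^2
  have hc : (starRingEnd ℂ) ζ ^ 2 + (starRingEnd ℂ) ζ + 1 = 0 := by
    have := congrArg (starRingEnd ℂ) hζ
    simpa [map_add, map_pow] using this
  have hne : ζ - (starRingEnd ℂ) ζ ≠ 0 := by
    intro h
    have hcz : (starRingEnd ℂ) ζ = ζ := (sub_eq_zero.mp h).symm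
    have hre : ((ζ.re : ℂ)) = ζ := Complex.conj_eq_iff_re.mp hcz
    rw [← hre] at hζ
    have hx : (ζ.re : ℝ) ^ 2 + ζ.re + 1 = 0 := by exact_mod_cast hζ
    nlinarith [sq_nonneg (ζ.re + 1/2)]
  have key : (ζ - (starRingEnd ℂ) ζ) * (ζ + (starRingEnd ℂ) ζ + 1) = 0 := by
    linear_combination hζ - hc
  have hsum : ζ + (starRingEnd ℂ) ζ + 1 = 0 := by
    rcases mul_eq_zero.mp key with h | h
    · exact absurd h hne
    · exact h
  have hconj : (starRingEnd ℂ) ζ = ζ ^ 2 := by linear_combination hsum - hζ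
  have hct : (starRingEnd ℂ) τ = (a : ℂ) * ζ ^ 2 + (b : ℂ) * ζ := by
    rw [hτ, hinv]
    simp only [map_add, map_mul, map_pow, Complex.conj_natCast, hconj]
    linear_combination ((b : ℂ) * ζ * (ζ - 1)) * hζ
  set c : ℂ := (starRingEnd ℂ) τ with hc'
  have hN : (1 - c) * (1 - τ) =
      ((a : ℂ) ^ 2 - a * b + b ^ 2 + a + b + 1) := by
    rw [hct, hτ, hinv]
    linear_combination ((a * b : ℂ) * ζ ^ 2 + ((a:ℂ)^2 + (b:ℂ)^2 - a * b) * ζ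
      + ((a:ℂ) * b - (a:ℂ)^2 - (b:ℂ)^2 - a - b)) * hζ
  have hconj1 : (starRingEnd ℂ) (1 - c) = 1 - τ := by
    simp [hc', Complex.conj_conj]
  have hnsq : Complex.normSq (1 - c) =
      (a : ℝ) ^ 2 - a * b + b ^ 2 + a + b + 1 := by
    have := Complex.mul_conj (1 - c)
    rw [hconj1, hN] at this
    have h2 := this.symm
    exact_mod_cast h2
  have habs : (‖1 - c‖) ^ 2 =
      (a : ℝ) ^ 2 - a * b + b ^ 2 + a + b + 1 := by
    rw [Complex.sq_norm, hnsq]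
  have hs3 : (0:ℝ) < Real.sqrt 3 := Real.sqrt_pos.mpr (by norm_num)
  have hlt' : (g : ℝ) + 2 < 3 * |(a : ℝ) - (b : ℝ)| := by
    have : ((g : ℤ) : ℝ) + 2 < 3 * |((a:ℤ):ℝ) - ((b:ℤ):ℝ)| := by
      exact_mod_cast hlt
    push_cast at this ⊢
    exact this
  have h1 : ((g : ℝ) + 2) ^ 2 < 9 * ((a : ℝ) - b) ^ 2 := by
    have h0 : (0:ℝ) ≤ (g : ℝ) + 2 := by positivity
    nlinarith [sq_abs ((a:ℝ) - b), abs_nonneg ((a:ℝ) - b)]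
  have hg' : (g : ℝ) = (a : ℝ) + b := by exact_mod_cast hg
  have hkey : (((g : ℝ) + 2) / Real.sqrt 3) ^ 2 < (‖1 - c‖) ^ 2 := by
    rw [habs, div_pow, Real.sq_sqrt (by norm_num : (3:ℝ) ≥ 0)]
    rw [div_lt_iff₀ (by norm_num : (0:ℝ) < 3)]
    nlinarith [h1, hg']
  have := lt_of_pow_lt_pow_left₀ 2 (norm_nonneg (1 - c)) hkey
  exact this
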